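/- Suppose for each p ≥ 3: V = δ₀ - X is independent of X, V is spherically symmetric and absolutely continuous, ‖X - δ‖/‖V‖ = o(p^{1/2}) in probability, and σ^{-2}‖X - δ‖·‖V‖ = o(p^{3/2}) in probability, as p → ∞. Then Pr_δ[‖δ̂⁺_JS(X; δ₀) - δ‖ > ‖X - δ‖] → 1 as p → ∞. -/

import Mathlib

open MeasureTheory ProbabilityTheory Metric Filter
open scoped ENNReal Topology RealInnerProductSpace

set_option maxHeartbeats 1000000

/-- The plus-rule (positive-part) James–Stein estimator. -/
noncomputable def jsPlus {p : ℕ} (σ : ℝ) (x δ₀ : EuclideanSpace ℝ (Fin p)) :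
    EuclideanSpace ℝ (Fin p) :=
  (max (1 - σ ^ 2 * ((p : ℝ) - 2) / ‖x - δ₀‖ ^ 2) 0) • (x - δ₀) + δ₀

noncomputable def Fdir {p : ℕ} (e v : EuclideanSpace ℝ (Fin p)) : ℝ≥0∞ :=
  ENNReal.ofReal (⟪e, v⟫ ^ 2 / ‖v‖ ^ 2)

lemma measurable_Fdir {p : ℕ} (e : EuclideanSpace ℝ (Fin p)) : Measurable (Fdir e) := by
  apply ENNReal.measurable_ofReal.comp
  exact (((continuous_const.inner continuous_id).pow 2).measurable).div
    ((continuous_norm.pow 2)).measurable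

lemma lintegral_Fdir {p : ℕ} (hp : 0 < p) (μ : Measure (EuclideanSpace ℝ (Fin p)))
    [IsProbabilityMeasure μ]
    (hsym : ∀ g : EuclideanSpace ℝ (Fin p) ≃ₗᵢ[ℝ] EuclideanSpace ℝ (Fin p), μ.map g = μ)
    (h0 : μ {0} = 0) (e : EuclideanSpace ℝ (Fin p)) (he : ‖e‖ = 1) :
    ∫⁻ v, Fdir e v ∂μ = (p : ℝ≥0∞)⁻¹ := by
  set b := EuclideanSpace.basisFun (Fin p) ℝ with hb
  have hbi : ∀ i (v : EuclideanSpace ℝ (Fin p)), ⟪b i, v⟫ = v i := by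
    intro i v
    rw [hb]
    simpa using EuclideanSpace.inner_single_left (𝕜 := ℝ) i 1 v
  have key : ∀ i, ∫⁻ v, Fdir e v ∂μ = ∫⁻ v, Fdir (b i) v ∂μ := by
    intro i
    set g := Submodule.reflection (ℝ ∙ (e - b i))ᗮ with hgdef
    have hg : g e = b i := Submodule.reflection_sub (by rw [he]; exact (b.orthonormal.1 i).symm)
    calc ∫⁻ v, Fdir e v ∂μ = ∫⁻ v, Fdir e v ∂(μ.map g) := by rw [hsym g]
      _ = ∫⁻ v, Fdir e (g v) ∂μ := lintegral_map (measurable_Fdir e) g.continuous.measurable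
      _ = ∫⁻ v, Fdir (b i) v ∂μ := by
          refine lintegral_congr fun v => ?_
          unfold Fdir
          have h1 : ⟪e, g v⟫ = ⟪b i, v⟫ := by
            calc ⟪e, g v⟫ = ⟪g (g e), g v⟫ := by rw [Submodule.reflection_involutive _ e]
              _ = ⟪g e, v⟫ := g.inner_map_map _ _
              _ = ⟪b i, v⟫ := by rw [hg]
          rw [h1, g.norm_map]
  have hsum : ∑ i : Fin p, ∫⁻ v, Fdir (b i) v ∂μ = 1 := by
    rw [← lintegral_finset_sum _ (fun i _ => measurable_Fdir (b i))]
    have hae : ∀ᵐ v ∂μ, (v : EuclideanSpace ℝ (Fin p)) ≠ 0 := by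
      rw [ae_iff]
      simpa using h0
    have : ∀ᵐ v ∂μ, ∑ i : Fin p, Fdir (b i) v = 1 := by
      filter_upwards [hae] with v hv
      have hnorm : ‖v‖ ^ 2 ≠ 0 := pow_ne_zero 2 (norm_ne_zero_iff.mpr hv)
      have h2 : ∀ i, Fdir (b i) v = ENNReal.ofReal ((v i) ^ 2 / ‖v‖ ^ 2) := fun i => by
        unfold Fdir; rw [hbi]
      simp_rw [h2]
      rw [← ENNReal.ofReal_sum_of_nonneg (fun i _ => by positivity), ← Finset.sum_div]
      have h3 : ∑ i : Fin p, (v i) ^ 2 = ‖v‖ ^ 2 := by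
        rw [EuclideanSpace.norm_eq, Real.sq_sqrt (by positivity)]
        simp [sq_abs]
      rw [h3, div_self hnorm]
      simp
    rw [lintegral_congr_ae this, lintegral_one, measure_univ]
  have hp' : (p : ℝ≥0∞) * ∫⁻ v, Fdir e v ∂μ = 1 := by
    calc (p : ℝ≥0∞) * ∫⁻ v, Fdir e v ∂μ = ∑ _i : Fin p, ∫⁻ v, Fdir e v ∂μ := by
          simp [Finset.sum_const, mul_comm]
      _ = ∑ i : Fin p, ∫⁻ v, Fdir (b i) v ∂μ := Finset.sum_congr rfl (fun i _ => key i)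
      _ = 1 := hsum
  have hpne : (p : ℝ≥0∞) ≠ 0 := Nat.cast_ne_zero.mpr hp.ne'
  have hptop : (p : ℝ≥0∞) ≠ ⊤ := ENNReal.natCast_ne_top p
  calc ∫⁻ v, Fdir e v ∂μ = (p : ℝ≥0∞)⁻¹ * ((p : ℝ≥0∞) * ∫⁻ v, Fdir e v ∂μ) := by
        rw [← mul_assoc, ENNReal.inv_mul_cancel hpne hptop, one_mul]
    _ = (p : ℝ≥0∞)⁻¹ := by rw [hp', mul_one]

lemma bad_bound {p : ℕ} (hp : 0 < p) {Ω : Type*} [MeasureSpace Ω]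
    [IsProbabilityMeasure (ℙ : Measure Ω)]
    (X V : Ω → EuclideanSpace ℝ (Fin p)) (hmX : Measurable X) (hmV : Measurable V)
    (δ : EuclideanSpace ℝ (Fin p))
    (hindep : IndepFun X V ℙ)
    (hsym : ∀ g : EuclideanSpace ℝ (Fin p) ≃ₗᵢ[ℝ] EuclideanSpace ℝ (Fin p),
      (Measure.map V ℙ).map g = Measure.map V ℙ)
    (h0 : Measure.map V ℙ {0} = 0)
    (c : ℝ) (hc : 0 < c) :
    ℙ {ω | X ω - δ ≠ 0 ∧ c * (‖X ω - δ‖ ^ 2 * ‖V ω‖ ^ 2) ≤ ⟪X ω - δ, V ω⟫ ^ 2}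
      ≤ ENNReal.ofReal (1 / (c * p)) := by
  set μ := Measure.map V ℙ with hμ
  set ν := Measure.map X ℙ with hν
  haveI : IsProbabilityMeasure μ := Measure.isProbabilityMeasure_map hmV.aemeasurable
  haveI : IsProbabilityMeasure ν := Measure.isProbabilityMeasure_map hmX.aemeasurable
  set S : Set (EuclideanSpace ℝ (Fin p) × EuclideanSpace ℝ (Fin p)) :=
    {q | q.1 - δ ≠ 0 ∧ c * (‖q.1 - δ‖ ^ 2 * ‖q.2‖ ^ 2) ≤ ⟪q.1 - δ, q.2⟫ ^ 2} with hSdef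
  have hS : MeasurableSet S := by
    refine MeasurableSet.inter ?_ ?_
    · exact (isClosed_singleton.preimage (continuous_fst.sub continuous_const)).measurableSet.compl
    · exact measurableSet_le
        ((continuous_const.mul (((continuous_fst.sub continuous_const).norm.pow 2).mul
          (continuous_snd.norm.pow 2))).measurable)
        ((((continuous_fst.sub continuous_const).inner continuous_snd).pow 2).measurable)
  have hmap : ℙ ((fun ω => (X ω, V ω)) ⁻¹' S) = (ν.prod μ) S := by
    rw [← (indepFun_iff_map_prod_eq_prod_map_map hmX.aemeasurable hmV.aemeasurable).mp hindep]
    exact (Measure.map_apply (hmX.prodMk hmV) hS).symm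
  have hset : {ω | X ω - δ ≠ 0 ∧ c * (‖X ω - δ‖ ^ 2 * ‖V ω‖ ^ 2) ≤ ⟪X ω - δ, V ω⟫ ^ 2}
      = (fun ω => (X ω, V ω)) ⁻¹' S := rfl
  rw [hset, hmap, Measure.prod_apply hS]
  have hin : ∀ x, μ (Prod.mk x ⁻¹' S) ≤ ENNReal.ofReal (1 / (c * p)) := by
    intro x
    by_cases hx : x - δ = 0
    · have : Prod.mk x ⁻¹' S = ∅ := by ext v; simp [hSdef, hx]
      simp [this]
    · set w := x - δ with hw
      set e := ‖w‖⁻¹ • w with he'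
      have hwn : (0:ℝ) < ‖w‖ := norm_pos_iff.mpr hx
      have he : ‖e‖ = 1 := by
        rw [he', norm_smul, norm_inv, norm_norm, inv_mul_cancel₀ hwn.ne']
      have hwe : ‖w‖ • e = w := by
        rw [he', smul_smul, mul_inv_cancel₀ hwn.ne', one_smul]
      have hsub : Prod.mk x ⁻¹' S ⊆ {0} ∪ {v | ENNReal.ofReal c ≤ Fdir e v} := by
        intro v hv
        rcases eq_or_ne v 0 with h | h
        · exact Or.inl h
        · refine Or.inr ?_
          have hv2 : c * (‖w‖ ^ 2 * ‖v‖ ^ 2) ≤ ⟪w, v⟫ ^ 2 := hv.2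
          have hinner : ⟪w, v⟫ = ‖w‖ * ⟪e, v⟫ := by
            rw [← hwe, real_inner_smul_left, hwe]
          have hvn : (0:ℝ) < ‖v‖ ^ 2 := pow_pos (norm_pos_iff.mpr h) 2
          have hcle : c ≤ ⟪e, v⟫ ^ 2 / ‖v‖ ^ 2 := by
            rw [le_div_iff₀ hvn]
            rw [hinner] at hv2
            have h1 : ‖w‖ ^ 2 * (c * ‖v‖ ^ 2) ≤ ‖w‖ ^ 2 * ⟪e, v⟫ ^ 2 := by nlinarith [hv2]
            exact le_of_mul_le_mul_left h1 (by positivity)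
          exact (ENNReal.ofReal_le_ofReal hcle)
      have markov := mul_meas_ge_le_lintegral₀ (μ := μ) (measurable_Fdir e).aemeasurable (ENNReal.ofReal c)
      rw [lintegral_Fdir hp μ hsym h0 e he] at markov
      have hkey : (p : ℝ≥0∞)⁻¹ = ENNReal.ofReal c * ENNReal.ofReal (1 / (c * p)) := by
        rw [← ENNReal.ofReal_mul hc.le]
        have hpr : (0:ℝ) < p := by exact_mod_cast hp
        have : c * (1 / (c * (p:ℝ))) = ((p:ℝ))⁻¹ := by field_simp
        rw [this, ENNReal.ofReal_inv_of_pos hpr, ENNReal.ofReal_natCast]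
      have hmark2 : μ {v | ENNReal.ofReal c ≤ Fdir e v} ≤ ENNReal.ofReal (1 / (c * p)) := by
        refine (ENNReal.mul_le_mul_iff_right (a := ENNReal.ofReal c)
          (by simpa using (ENNReal.ofReal_pos.mpr hc).ne') ENNReal.ofReal_ne_top).mp ?_
        rw [← hkey]
        exact markov
      calc μ (Prod.mk x ⁻¹' S) ≤ μ ({0} ∪ {v | ENNReal.ofReal c ≤ Fdir e v}) := measure_mono hsub
        _ ≤ μ {0} + μ {v | ENNReal.ofReal c ≤ Fdir e v} := measure_union_le _ _
        _ ≤ 0 + ENNReal.ofReal (1 / (c * p)) := add_le_add (le_of_eq h0) hmark2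
        _ = ENNReal.ofReal (1 / (c * p)) := by rw [zero_add]
  calc ∫⁻ x, μ (Prod.mk x ⁻¹' S) ∂ν ≤ ∫⁻ _x, ENNReal.ofReal (1 / (c * p)) ∂ν :=
        lintegral_mono hin
    _ = ENNReal.ofReal (1 / (c * p)) := by simp

lemma geom_lemma {p : ℕ} (hp : 3 ≤ p) {σ r : ℝ} (hσ : 0 < σ) (hr : 0 < r)
    (W V : EuclideanSpace ℝ (Fin p)) (hV : V ≠ 0)
    (h1 : ‖W‖ / ‖V‖ < r * Real.sqrt p)
    (h2 : ‖W‖ * ‖V‖ / σ ^ 2 < r * (p : ℝ) ^ ((3 : ℝ) / 2))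
    (hfail : ‖W + (1 - max (1 - σ ^ 2 * ((p : ℝ) - 2) / ‖V‖ ^ 2) 0) • V‖ ≤ ‖W‖) :
    W ≠ 0 ∧ 1 / (36 * r ^ 2 * p) * (‖W‖ ^ 2 * ‖V‖ ^ 2) ≤ ⟪W, V⟫ ^ 2 := by
  have hpR : (3:ℝ) ≤ (p:ℝ) := by exact_mod_cast hp
  have h9 : (0:ℝ) ≤ 9 * ((p:ℝ) - 2) ^ 2 - (p:ℝ) ^ 2 := by nlinarith [hpR]
  have hs : (0:ℝ) < σ ^ 2 := by positivity
  set a := σ ^ 2 * ((p : ℝ) - 2) with ha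
  have ha0 : 0 < a := by nlinarith
  have hVn : 0 < ‖V‖ := norm_pos_iff.mpr hV
  have hVs : 0 < ‖V‖ ^ 2 := by positivity
  set t := 1 - max (1 - a / ‖V‖ ^ 2) 0 with htdef
  have ht0 : 0 < t := by
    have hlt : max (1 - a / ‖V‖ ^ 2) 0 < 1 := by
      apply max_lt _ one_pos
      have : 0 < a / ‖V‖ ^ 2 := div_pos ha0 hVs
      linarith
    simp only [htdef]; linarith
  have htmin : t * ‖V‖ ^ 2 = min a (‖V‖ ^ 2) := by
    rcases le_total (a / ‖V‖ ^ 2) 1 with h | h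
    · rw [htdef, max_eq_left (by linarith), min_eq_left (by nlinarith [(div_le_one hVs).mp h])]
      field_simp
      ring
    · rw [htdef, max_eq_right (by linarith), min_eq_right (by nlinarith [(one_le_div hVs).mp h])]
      ring
  have hexp : ‖W + t • V‖ ^ 2 = ‖W‖ ^ 2 + 2 * (t * ⟪W, V⟫) + t ^ 2 * ‖V‖ ^ 2 := by
    rw [norm_add_sq_real, real_inner_smul_right, norm_smul, Real.norm_eq_abs, mul_pow, sq_abs]
  have hfail2 : ‖W + t • V‖ ^ 2 ≤ ‖W‖ ^ 2 := pow_le_pow_left₀ (norm_nonneg _) hfail 2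
  clear_value t a
  have h5 : 2 * ⟪W, V⟫ + t * ‖V‖ ^ 2 ≤ 0 := by
    by_contra h'
    push_neg at h'
    nlinarith [mul_pos ht0 h']
  have hip : ⟪W, V⟫ ≤ -(min a (‖V‖ ^ 2)) / 2 := by
    rw [← htmin]; nlinarith [h5]
  have hmin0 : 0 < min a (‖V‖ ^ 2) := lt_min ha0 hVs
  have hWne : W ≠ 0 := by
    intro h
    rw [h, inner_zero_left] at hip
    linarith
  refine ⟨hWne, ?_⟩
  have hsq : (min a (‖V‖ ^ 2)) ^ 2 / 4 ≤ ⟪W, V⟫ ^ 2 := by nlinarith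
  have hpp : (0:ℝ) < (p:ℝ) := by linarith
  have hc : (0:ℝ) < 36 * r ^ 2 * p := by positivity
  have hsqrt : Real.sqrt p ^ 2 = p := Real.sq_sqrt (by positivity)
  have hp32 : ((p:ℝ) ^ ((3 : ℝ) / 2)) ^ 2 = (p:ℝ) ^ 3 := by
    rw [← Real.rpow_natCast ((p:ℝ) ^ ((3 : ℝ) / 2)) 2, ← Real.rpow_mul (by positivity)]
    rw [show ((3:ℝ) / 2 * (2:ℕ)) = ((3:ℕ):ℝ) by norm_num, Real.rpow_natCast]
  rw [one_div, inv_mul_le_iff₀ hc]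
  have hinn : (0:ℝ) ≤ ⟪W, V⟫ ^ 2 := sq_nonneg _
  rcases le_total a (‖V‖ ^ 2) with hm | hm
  · -- halfspace case: min = a
    rw [min_eq_left hm] at hsq
    have h2' : ‖W‖ * ‖V‖ < r * (p:ℝ) ^ ((3 : ℝ) / 2) * σ ^ 2 := by
      rw [div_lt_iff₀ hs] at h2; linarith
    have h2sq : ‖W‖ ^ 2 * ‖V‖ ^ 2 < r ^ 2 * (p:ℝ) ^ 3 * (σ ^ 2) ^ 2 := by
      calc ‖W‖ ^ 2 * ‖V‖ ^ 2 = (‖W‖ * ‖V‖) ^ 2 := (mul_pow _ _ 2).symm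
        _ < (r * (p:ℝ) ^ ((3 : ℝ) / 2) * σ ^ 2) ^ 2 :=
            pow_lt_pow_left₀ h2' (by positivity) two_ne_zero
        _ = r ^ 2 * (p:ℝ) ^ 3 * (σ ^ 2) ^ 2 := by rw [mul_pow, mul_pow, hp32]
    have key : r ^ 2 * (p:ℝ) ^ 3 * (σ ^ 2) ^ 2 ≤ 36 * r ^ 2 * (p:ℝ) * (a ^ 2 / 4) := by
      have hh : (0:ℝ) ≤ r ^ 2 * (p:ℝ) * (σ ^ 2) ^ 2 * (9 * ((p:ℝ) - 2) ^ 2 - (p:ℝ) ^ 2) :=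
        mul_nonneg (by positivity) h9
      rw [ha]; nlinarith [hh]
    have last : 36 * r ^ 2 * (p:ℝ) * (a ^ 2 / 4) ≤ 36 * r ^ 2 * (p:ℝ) * ⟪W, V⟫ ^ 2 :=
      mul_le_mul_of_nonneg_left hsq (by positivity)
    linarith
  · -- ball case: min = ‖V‖²
    rw [min_eq_right hm] at hsq
    have h1' : ‖W‖ < r * Real.sqrt p * ‖V‖ := by
      rw [div_lt_iff₀ hVn] at h1; linarith
    have h1sq : ‖W‖ ^ 2 < r ^ 2 * (p:ℝ) * ‖V‖ ^ 2 := by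
      calc ‖W‖ ^ 2 < (r * Real.sqrt p * ‖V‖) ^ 2 :=
            pow_lt_pow_left₀ h1' (norm_nonneg _) two_ne_zero
        _ = r ^ 2 * (p:ℝ) * ‖V‖ ^ 2 := by rw [mul_pow, mul_pow, hsqrt]
    have step1 : ‖W‖ ^ 2 * ‖V‖ ^ 2 ≤ r ^ 2 * (p:ℝ) * (‖V‖ ^ 2 * ‖V‖ ^ 2) := by
      nlinarith [mul_nonneg (sub_nonneg.mpr h1sq.le) hVs.le]
    have step2 : ‖V‖ ^ 2 * ‖V‖ ^ 2 ≤ 4 * ⟪W, V⟫ ^ 2 := by nlinarith [hsq]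
    have step3 : r ^ 2 * (p:ℝ) * (‖V‖ ^ 2 * ‖V‖ ^ 2) ≤ r ^ 2 * (p:ℝ) * (4 * ⟪W, V⟫ ^ 2) :=
      mul_le_mul_of_nonneg_left step2 (by positivity)
    nlinarith [mul_nonneg (mul_nonneg (sq_nonneg r) hpp.le) hinn]

lemma jsPlus_sub {p : ℕ} (σ : ℝ) (x d0 d : EuclideanSpace ℝ (Fin p)) :
    jsPlus σ x d0 - d
      = (x - d) + (1 - max (1 - σ ^ 2 * ((p : ℝ) - 2) / ‖d0 - x‖ ^ 2) 0) • (d0 - x) := by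
  unfold jsPlus
  rw [norm_sub_rev d0 x]
  set c := max (1 - σ ^ 2 * ((p : ℝ) - 2) / ‖x - d0‖ ^ 2) 0 with hc
  rw [sub_smul, one_smul, smul_sub, smul_sub]
  abel


/-- the Reverse Stein Effect: If for each `p` the displacement
`V = δ₀ - X` of the data-dependent target is independent of `X`, spherically symmetric
and absolutely continuous, with `‖X - δ‖/‖V‖ = o(p^{1/2})` and
`σ⁻²‖X - δ‖·‖V‖ = o(p^{3/2})` in probability, then
`Pr[‖δ̂⁺_JS(X; δ₀) - δ‖ > ‖X - δ‖] → 1` as `p → ∞`. -/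
theorem reverse_stein_stmt19
    (Ω : ℕ → Type*) [∀ p, MeasureSpace (Ω p)]
    [∀ p, IsProbabilityMeasure (ℙ : Measure (Ω p))]
    (X δ₀ : ∀ p, Ω p → EuclideanSpace ℝ (Fin p))
    (δ : ∀ p, EuclideanSpace ℝ (Fin p)) (σ : ℕ → ℝ) (hσ : ∀ p, 0 < σ p)
    (hmX : ∀ p, Measurable (X p)) (hmδ₀ : ∀ p, Measurable (δ₀ p))
    (hindep : ∀ p, IndepFun (fun ω => δ₀ p ω - X p ω) (X p) (ℙ : Measure (Ω p)))
    (hsph : ∀ p, ∀ g : EuclideanSpace ℝ (Fin p) ≃ₗᵢ[ℝ] EuclideanSpace ℝ (Fin p),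
      Measure.map (fun ω => g (δ₀ p ω - X p ω)) (ℙ : Measure (Ω p))
        = Measure.map (fun ω => δ₀ p ω - X p ω) (ℙ : Measure (Ω p)))
    (habs : ∀ p, Measure.map (fun ω => δ₀ p ω - X p ω) (ℙ : Measure (Ω p)) ≪ volume)
    (hsmall₁ : ∀ ε : ℝ, 0 < ε →
      Tendsto (fun p => (ℙ : Measure (Ω p))
          {ω | ε * Real.sqrt p ≤ ‖X p ω - δ p‖ / ‖δ₀ p ω - X p ω‖})
        atTop (𝓝 0))
    (hsmall₂ : ∀ ε : ℝ, 0 < ε →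
      Tendsto (fun p => (ℙ : Measure (Ω p))
          {ω | ε * (p : ℝ) ^ ((3 : ℝ) / 2)
                ≤ ‖X p ω - δ p‖ * ‖δ₀ p ω - X p ω‖ / (σ p) ^ 2})
        atTop (𝓝 0)) :
    Tendsto (fun p => (ℙ : Measure (Ω p))
        {ω | ‖X p ω - δ p‖ < ‖jsPlus (σ p) (X p ω) (δ₀ p ω) - δ p‖})
      atTop (𝓝 1) := by
  rw [ENNReal.tendsto_nhds (by norm_num : (1 : ℝ≥0∞) ≠ ⊤)]
  intro η hη
  -- choose a small real parameter r with ofReal (36 r²) ≤ η/3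
  obtain ⟨r, hr, hrle⟩ : ∃ r : ℝ, 0 < r ∧ ENNReal.ofReal (36 * r ^ 2) ≤ η / 3 := by
    set m := min (η / 3) 1 with hm
    have hm0 : (0 : ℝ≥0∞) < m :=
      lt_min (ENNReal.div_pos hη.ne' (by norm_num)) one_pos
    have hmtop : m ≠ ⊤ := ((min_le_right _ _).trans_lt (by norm_num)).ne
    have hmr : (0 : ℝ) < m.toReal := ENNReal.toReal_pos hm0.ne' hmtop
    refine ⟨Real.sqrt (m.toReal / 36), Real.sqrt_pos.mpr (by positivity), ?_⟩
    have h36 : 36 * Real.sqrt (m.toReal / 36) ^ 2 = m.toReal := by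
      rw [Real.sq_sqrt (by positivity)]; field_simp
    rw [h36, ENNReal.ofReal_toReal hmtop]
    exact min_le_left _ _
  have hη3 : (0 : ℝ≥0∞) < η / 3 := ENNReal.div_pos hη.ne' (by norm_num)
  have h1ev := (hsmall₁ r hr).eventually (gt_mem_nhds hη3)
  have h2ev := (hsmall₂ r hr).eventually (gt_mem_nhds hη3)
  filter_upwards [h1ev, h2ev, eventually_ge_atTop 3] with p hp1 hp2 hp3
  set W : Ω p → EuclideanSpace ℝ (Fin p) := fun ω => X p ω - δ p with hW
  set V : Ω p → EuclideanSpace ℝ (Fin p) := fun ω => δ₀ p ω - X p ω with hV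
  have hmV : Measurable V := (hmδ₀ p).sub (hmX p)
  have hp0 : 0 < p := by omega
  have hppos : (0 : ℝ) < (p : ℝ) := by exact_mod_cast hp0
  set c : ℝ := 1 / (36 * r ^ 2 * p) with hcdef
  have hc : 0 < c := by positivity
  set G : Set (Ω p) :=
    {ω | ‖X p ω - δ p‖ < ‖jsPlus (σ p) (X p ω) (δ₀ p ω) - δ p‖} with hG
  set E₁ : Set (Ω p) := {ω | r * Real.sqrt p ≤ ‖X p ω - δ p‖ / ‖δ₀ p ω - X p ω‖} with hE1
  set E₂ : Set (Ω p) :=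
    {ω | r * (p : ℝ) ^ ((3 : ℝ) / 2) ≤ ‖X p ω - δ p‖ * ‖δ₀ p ω - X p ω‖ / (σ p) ^ 2}
    with hE2
  set Z : Set (Ω p) := {ω | V ω = 0} with hZ
  set Bad : Set (Ω p) :=
    {ω | X p ω - δ p ≠ 0 ∧ c * (‖X p ω - δ p‖ ^ 2 * ‖V ω‖ ^ 2) ≤ ⟪X p ω - δ p, V ω⟫ ^ 2}
    with hBad
  -- the inclusion of the failure event
  have hsub : Gᶜ ⊆ E₁ ∪ (E₂ ∪ (Z ∪ Bad)) := by
    intro ω hω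
    by_cases hz : V ω = 0
    · exact Or.inr (Or.inr (Or.inl hz))
    by_cases he1 : ω ∈ E₁
    · exact Or.inl he1
    by_cases he2 : ω ∈ E₂
    · exact Or.inr (Or.inl he2)
    refine Or.inr (Or.inr (Or.inr ?_))
    have h1' : ‖X p ω - δ p‖ / ‖V ω‖ < r * Real.sqrt p := not_le.mp he1
    have h2' : ‖X p ω - δ p‖ * ‖V ω‖ / (σ p) ^ 2 < r * (p : ℝ) ^ ((3 : ℝ) / 2) :=
      not_le.mp he2
    have hfail : ‖(X p ω - δ p) +
        (1 - max (1 - (σ p) ^ 2 * ((p : ℝ) - 2) / ‖V ω‖ ^ 2) 0) • V ω‖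
        ≤ ‖X p ω - δ p‖ := by
      have hω' : ¬ (‖X p ω - δ p‖ < ‖jsPlus (σ p) (X p ω) (δ₀ p ω) - δ p‖) := hω
      have := not_lt.mp hω'
      rw [jsPlus_sub (σ p) (X p ω) (δ₀ p ω) (δ p)] at this
      exact this
    have hgeo := geom_lemma hp3 (hσ p) hr (X p ω - δ p) (V ω) hz h1' h2' hfail
    rw [← hcdef] at hgeo
    exact hgeo
  -- probability of {V = 0} vanishes
  have hvol : (volume : Measure (EuclideanSpace ℝ (Fin p))) {0} = 0 := by
    haveI : Nonempty (Fin p) := ⟨⟨0, hp0⟩⟩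
    haveI : Nontrivial (EuclideanSpace ℝ (Fin p)) := inferInstance
    exact measure_singleton 0
  have h0' : Measure.map V ℙ {0} = 0 := by rw [hV]; exact habs p hvol
  have hZ0 : (ℙ : Measure (Ω p)) Z = 0 := by
    have hZeq : Z = V ⁻¹' {0} := rfl
    rw [hZeq, ← Measure.map_apply hmV (measurableSet_singleton 0)]
    exact h0'
  -- probability of Bad
  have hBadle : (ℙ : Measure (Ω p)) Bad ≤ η / 3 := by
    have hsym : ∀ g : EuclideanSpace ℝ (Fin p) ≃ₗᵢ[ℝ] EuclideanSpace ℝ (Fin p),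
        (Measure.map V ℙ).map g = Measure.map V ℙ := by
      intro g
      rw [Measure.map_map g.continuous.measurable hmV]
      exact hsph p g
    have hb := bad_bound hp0 (X p) V (hmX p) hmV (δ p) (hindep p).symm hsym h0' c hc
    have heq : ENNReal.ofReal (1 / (c * p)) = ENNReal.ofReal (36 * r ^ 2) := by
      congr 1
      rw [hcdef]
      field_simp
    calc (ℙ : Measure (Ω p)) Bad ≤ ENNReal.ofReal (1 / (c * p)) := hb
      _ = ENNReal.ofReal (36 * r ^ 2) := heq
      _ ≤ η / 3 := hrle
  -- total bound on the failure probability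
  have hfailbound : (ℙ : Measure (Ω p)) Gᶜ ≤ η := by
    calc (ℙ : Measure (Ω p)) Gᶜ ≤ (ℙ : Measure (Ω p)) (E₁ ∪ (E₂ ∪ (Z ∪ Bad))) :=
          measure_mono hsub
      _ ≤ ℙ E₁ + ℙ (E₂ ∪ (Z ∪ Bad)) := measure_union_le _ _
      _ ≤ ℙ E₁ + (ℙ E₂ + ℙ (Z ∪ Bad)) := by
          gcongr
          exact measure_union_le _ _
      _ ≤ ℙ E₁ + (ℙ E₂ + (ℙ Z + ℙ Bad)) := by
          gcongr
          exact measure_union_le _ _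
      _ ≤ η / 3 + (η / 3 + (0 + η / 3)) := by
          gcongr
          exact hZ0.le
      _ = η / 3 + η / 3 + η / 3 := by rw [zero_add, ← add_assoc]
      _ = η := ENNReal.add_thirds η
  constructor
  · -- lower bound
    rw [tsub_le_iff_right]
    calc (1 : ℝ≥0∞) = ℙ (G ∪ Gᶜ) := by rw [Set.union_compl_self]; exact (measure_univ).symm
      _ ≤ ℙ G + ℙ Gᶜ := measure_union_le _ _
      _ ≤ ℙ G + η := by gcongr
  · exact le_trans prob_le_one le_self_add
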